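/- Suppose x ∈ ℝᵐ is supported on T∪Δ, y = Ax + w, and Q_{T,λ}(Δ) is invertible. Let c(Δ) be the regularized least-squares estimate supported on T∪Δ, i.e., c(Δ)_{T∪Δ} = Q_{T,λ}(Δ)^{-1}(A_{T∪Δ}'y + [λμ̂_T; 0_Δ]). Then ‖c(Δ) − x‖₂ ≤ λ‖Q_{T,λ}(Δ)^{-1}‖₂ · ‖x_T − μ̂_T‖₂ + ‖Q_{T,λ}(Δ)^{-1} A_{T∪Δ}'‖₂ · ‖w‖₂. -/

import Mathlib

open Matrix BigOperators Finset

noncomputable section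

abbrev Idx {m : ℕ} (T : Finset (Fin m)) := {j : Fin m // j ∈ T}

/-- Submatrix of `A` consisting of the columns indexed by `T`. -/
def colsub {n m : ℕ} (A : Matrix (Fin n) (Fin m) ℝ) (T : Finset (Fin m)) :
    Matrix (Fin n) (Idx T) ℝ := Matrix.of fun i j => A i j.1

/-- Euclidean (ℓ2) norm of a finitely indexed vector. -/
def l2 {α : Type*} [Fintype α] (v : α → ℝ) : ℝ := Real.sqrt (∑ i, v i ^ 2)

/-- ℓ1 norm. -/
def l1 {α : Type*} [Fintype α] (v : α → ℝ) : ℝ := ∑ i, |v i|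

/-- ℓ∞ (sup) norm. -/
def linf {α : Type*} [Fintype α] (v : α → ℝ) : ℝ := ⨆ i, |v i|

/-- Spectral (ℓ2 operator) norm of a matrix. -/
def spec {α β : Type*} [Fintype α] [Fintype β] [DecidableEq β] (M : Matrix α β ℝ) : ℝ :=
  ‖LinearMap.toContinuousLinearMap (Matrix.toEuclideanLin M)‖

/-- `Q_{T,λ}(S) = A_{T∪S}' A_{T∪S} + λ·diag(I_T, 0_S)`. -/
def Qmat {n m : ℕ} (A : Matrix (Fin n) (Fin m) ℝ) (T S : Finset (Fin m)) (lam : ℝ) :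
    Matrix (Idx (T ∪ S)) (Idx (T ∪ S)) ℝ :=
  (colsub A (T ∪ S))ᵀ * colsub A (T ∪ S) +
    lam • (Matrix.of (fun i j => if i = j ∧ (i : Fin m) ∈ T then (1 : ℝ) else 0) :
      Matrix (Idx (T ∪ S)) (Idx (T ∪ S)) ℝ)

/-- `M_{T,λ} = I − A_T (A_T'A_T + λ I_T)⁻¹ A_T'`. -/
def Mmat {n m : ℕ} (A : Matrix (Fin n) (Fin m) ℝ) (T : Finset (Fin m)) (lam : ℝ) :
    Matrix (Fin n) (Fin n) ℝ :=
  1 - colsub A T * ((colsub A T)ᵀ * colsub A T + lam • 1)⁻¹ * (colsub A T)ᵀ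

/-- `P_{T,λ}(Δ) = (A_Δ' M A_Δ)⁻¹`. -/
def Pmat {n m : ℕ} (A : Matrix (Fin n) (Fin m) ℝ) (T Δ : Finset (Fin m)) (lam : ℝ) :
    Matrix (Idx Δ) (Idx Δ) ℝ :=
  ((colsub A Δ)ᵀ * Mmat A T lam * colsub A Δ)⁻¹

/-- The regularized least-squares estimate supported on `T ∪ S`:
`c_{T∪S} = Q⁻¹ (A_{T∪S}' y + [λμ̂_T ; 0_S])`, zero outside `T ∪ S`. -/
def cvec {n m : ℕ} (A : Matrix (Fin n) (Fin m) ℝ) (T S : Finset (Fin m)) (lam : ℝ)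
    (y : Fin n → ℝ) (μ : Fin m → ℝ) : Fin m → ℝ :=
  fun i => if h : i ∈ T ∪ S then
    (Qmat A T S lam)⁻¹.mulVec
      (fun j => (∑ k, A k j.1 * y k) + (if (j : Fin m) ∈ T then lam * μ j.1 else 0)) ⟨i, h⟩
  else 0

/-- The reg-mod-BPDN objective
`L(b) = γ‖b_{T^c}‖₁ + (1/2)‖y − Ab‖₂² + (λ/2)‖b_T − μ̂_T‖₂²`. -/
def Lobj {n m : ℕ} (A : Matrix (Fin n) (Fin m) ℝ) (T : Finset (Fin m)) (γ lam : ℝ)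
    (y : Fin n → ℝ) (μ : Fin m → ℝ) (b : Fin m → ℝ) : ℝ :=
  γ * (∑ i ∈ Tᶜ, |b i|) + (1/2) * (∑ i, (y i - A.mulVec b i) ^ 2) +
    (lam/2) * (∑ i ∈ T, (b i - μ i) ^ 2)

/-- The quadratic part `L₁(b) = (1/2)‖y − Ab‖₂² + (λ/2)‖b_T − μ̂_T‖₂²`. -/
def L1obj {n m : ℕ} (A : Matrix (Fin n) (Fin m) ℝ) (T : Finset (Fin m)) (lam : ℝ)
    (y : Fin n → ℝ) (μ : Fin m → ℝ) (b : Fin m → ℝ) : ℝ :=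
  (1/2) * (∑ i, (y i - A.mulVec b i) ^ 2) + (lam/2) * (∑ i ∈ T, (b i - μ i) ^ 2)

/-- `ERC_{T,λ}(Δ) = 1 − max_{ω∉T∪Δ} ‖P(Δ) A_Δ' M A_ω‖₁`. -/
def ERC {n m : ℕ} (A : Matrix (Fin n) (Fin m) ℝ) (T Δ : Finset (Fin m)) (lam : ℝ) : ℝ :=
  1 - ⨆ ω : Idx ((T ∪ Δ)ᶜ),
    l1 ((Pmat A T Δ lam * (colsub A Δ)ᵀ * Mmat A T lam).mulVec (fun i => A i ω.1))

/-- `f₁(Δ)`. -/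
def f1 {n m : ℕ} (A : Matrix (Fin n) (Fin m) ℝ) (T Δ : Finset (Fin m)) (lam : ℝ) : ℝ :=
  Real.sqrt
    (spec (((colsub A T)ᵀ * colsub A T + lam • 1)⁻¹ * (colsub A T)ᵀ * colsub A Δ *
        Pmat A T Δ lam) ^ 2 + spec (Pmat A T Δ lam) ^ 2)

/-- `f₂(Δ) = ‖Q⁻¹‖₂`. -/
def f2 {n m : ℕ} (A : Matrix (Fin n) (Fin m) ℝ) (T Δ : Finset (Fin m)) (lam : ℝ) : ℝ :=
  spec ((Qmat A T Δ lam)⁻¹)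

/-- `f₃(Δ) = ‖Q⁻¹ A_{T∪Δ}'‖₂`. -/
def f3 {n m : ℕ} (A : Matrix (Fin n) (Fin m) ℝ) (T Δ : Finset (Fin m)) (lam : ℝ) : ℝ :=
  spec ((Qmat A T Δ lam)⁻¹ * (colsub A (T ∪ Δ))ᵀ)

/-- `f₄(Δ̃) = sqrt(‖Q(Δ̃)⁻¹ A_{T∪Δ̃}' A_{Δ∖Δ̃}‖₂² + 1)`. -/
def f4 {n m : ℕ} (A : Matrix (Fin n) (Fin m) ℝ) (T Δ Δt : Finset (Fin m)) (lam : ℝ) : ℝ :=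
  Real.sqrt
    (spec ((Qmat A T Δt lam)⁻¹ * (colsub A (T ∪ Δt))ᵀ * colsub A (Δ \ Δt)) ^ 2 + 1)

/-- Numerator of `γ*`: `‖A_{(T∪Δ)^c}'(y − A c(Δ))‖_∞`. -/
def gammaNum {n m : ℕ} (A : Matrix (Fin n) (Fin m) ℝ) (T Δ : Finset (Fin m)) (lam : ℝ)
    (y : Fin n → ℝ) (μ : Fin m → ℝ) : ℝ :=
  linf (fun j : Idx ((T ∪ Δ)ᶜ) =>
    ∑ i, A i j.1 * (y i - A.mulVec (cvec A T Δ lam y μ) i))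

/-- `γ*_{T,λ}(Δ)`. -/
def gammaStar {n m : ℕ} (A : Matrix (Fin n) (Fin m) ℝ) (T Δ : Finset (Fin m)) (lam : ℝ)
    (y : Fin n → ℝ) (μ : Fin m → ℝ) : ℝ :=
  gammaNum A T Δ lam y μ / ERC A T Δ lam


section AuxL2

variable {α β : Type*} [Fintype α] [Fintype β]

lemma l2_eq_norm (v : α → ℝ) : l2 v = ‖(WithLp.equiv 2 (α → ℝ)).symm v‖ := by
  rw [EuclideanSpace.norm_eq]
  simp [l2, Real.norm_eq_abs, sq_abs]

lemma l2_nonneg (v : α → ℝ) : 0 ≤ l2 v := Real.sqrt_nonneg _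

lemma l2_sub_le (u v : α → ℝ) : l2 (u - v) ≤ l2 u + l2 v := by
  simp only [l2_eq_norm]
  have h : (WithLp.equiv 2 (α → ℝ)).symm (u - v) =
      (WithLp.equiv 2 (α → ℝ)).symm u - (WithLp.equiv 2 (α → ℝ)).symm v := rfl
  rw [h]
  exact norm_sub_le _ _

lemma l2_smul (c : ℝ) (v : α → ℝ) : l2 (c • v) = |c| * l2 v := by
  simp only [l2_eq_norm]
  have h : (WithLp.equiv 2 (α → ℝ)).symm (c • v) =
      c • (WithLp.equiv 2 (α → ℝ)).symm v := rfl
  rw [h, norm_smul, Real.norm_eq_abs]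

lemma l2_mulVec_le [DecidableEq β] (M : Matrix α β ℝ) (v : β → ℝ) :
    l2 (M.mulVec v) ≤ spec M * l2 v := by
  simp only [l2_eq_norm]
  rw [WithLp.equiv_symm_apply, WithLp.equiv_symm_apply, ← Matrix.toEuclideanLin_apply_piLp_toLp]
  exact (LinearMap.toContinuousLinearMap (Matrix.toEuclideanLin M)).le_opNorm _

end AuxL2

lemma sum_idx_eq {m : ℕ} (S : Finset (Fin m)) (f : Fin m → ℝ)
    (hf : ∀ i ∉ S, f i = 0) : ∑ j : Idx S, f j.1 = ∑ i, f i := by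
  rw [Finset.sum_coe_sort S f]
  exact Finset.sum_subset (Finset.subset_univ S) (fun i _ hi => hf i hi)

/-- `‖c(Δ) − x‖₂ ≤ λ‖Q⁻¹‖₂‖x_T − μ̂_T‖₂ + ‖Q⁻¹A_{T∪Δ}'‖₂‖w‖₂`. -/
theorem stmt6 {n m : ℕ} (A : Matrix (Fin n) (Fin m) ℝ) (T Δ : Finset (Fin m))
    (hTΔ : Disjoint T Δ) (lam : ℝ) (hlam : 0 ≤ lam)
    (x : Fin m → ℝ) (w y : Fin n → ℝ) (μ : Fin m → ℝ)
    (hx : ∀ i ∉ T ∪ Δ, x i = 0)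
    (hy : y = fun i => A.mulVec x i + w i)
    (hQ : IsUnit (Qmat A T Δ lam)) :
    l2 (fun i => cvec A T Δ lam y μ i - x i) ≤
      lam * f2 A T Δ lam * l2 (fun j : Idx T => x j.1 - μ j.1) +
        f3 A T Δ lam * l2 w := by
  classical
  set S := T ∪ Δ with hS
  set Q := Qmat A T Δ lam with hQdef
  set B := colsub A S with hBdef
  -- restricted vectors
  set xS : Idx S → ℝ := fun j => x j.1 with hxS
  set u : Idx S → ℝ := fun j => if (j : Fin m) ∈ T then x j.1 - μ j.1 else 0 with hu
  set b : Idx S → ℝ :=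
    fun j => (∑ k, A k j.1 * y k) + (if (j : Fin m) ∈ T then lam * μ j.1 else 0) with hb
  have hQinv : Q⁻¹ * Q = 1 :=
    Matrix.nonsing_inv_mul Q ((Matrix.isUnit_iff_isUnit_det Q).mp hQ)
  -- B *ᵥ xS = A *ᵥ x
  have hBx : B.mulVec xS = A.mulVec x := by
    funext k
    simp only [Matrix.mulVec, dotProduct, hBdef, colsub, Matrix.of_apply]
    exact sum_idx_eq S (fun j => A k j * x j) (fun i hi => by show A k i * x i = 0; rw [hx i hi, mul_zero])
  -- Q *ᵥ xS
  have hQx : Q.mulVec xS =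
      fun j : Idx S => (∑ k, A k j.1 * (A.mulVec x) k) +
        lam * (if (j : Fin m) ∈ T then x j.1 else 0) := by
    funext j
    have h1 : Q.mulVec xS j = (Bᵀ.mulVec (B.mulVec xS)) j +
        lam * (∑ i : Idx S, (if j = i ∧ (j : Fin m) ∈ T then (1:ℝ) else 0) * xS i) := by
      simp only [hQdef, Qmat, Matrix.add_mulVec, Matrix.smul_mulVec,
        Matrix.mulVec_mulVec, Pi.add_apply, Pi.smul_apply, smul_eq_mul]
      congr 1
      all_goals simp [Matrix.mulVec, dotProduct]
    rw [h1, hBx]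
    have hsum : ∑ i : Idx S, (if j = i ∧ (j : Fin m) ∈ T then (1:ℝ) else 0) * xS i =
        if (j : Fin m) ∈ T then x j.1 else 0 := by
      simp only [ite_and, ite_mul, one_mul, zero_mul]
      by_cases hjT : (j : Fin m) ∈ T
      · simp [hjT, Finset.sum_ite_eq, hxS]
      · simp [hjT]
    rw [hsum]
    congr 1
    all_goals simp [Matrix.mulVec, dotProduct, hBdef, colsub]
  -- key identity
  have hkey : (fun j : Idx S => cvec A T Δ lam y μ j.1 - x j.1) =
      (Q⁻¹ * Bᵀ).mulVec w - lam • (Q⁻¹.mulVec u) := by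
    have hc : (fun j : Idx S => cvec A T Δ lam y μ j.1) = Q⁻¹.mulVec b := by
      funext j
      simp only [cvec]
      rw [dif_pos j.2]
    have hxrec : Q⁻¹.mulVec (Q.mulVec xS) = xS := by
      rw [Matrix.mulVec_mulVec, hQinv, Matrix.one_mulVec]
    funext j
    have : cvec A T Δ lam y μ j.1 = Q⁻¹.mulVec b j := congrFun hc j
    rw [this]
    have hxj : x j.1 = Q⁻¹.mulVec (Q.mulVec xS) j := by rw [hxrec]
    rw [hxj]
    have hsub : Q⁻¹.mulVec b j - Q⁻¹.mulVec (Q.mulVec xS) j =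
        Q⁻¹.mulVec (b - Q.mulVec xS) j := by
      simp [Matrix.mulVec_sub]
    rw [hsub]
    have hbq : b - Q.mulVec xS = Bᵀ.mulVec w - lam • u := by
      funext i
      rw [hQx]
      simp only [Pi.sub_apply, hb, hu, Pi.smul_apply, smul_eq_mul]
      have hyi : ∑ k, A k i.1 * y k =
          (∑ k, A k i.1 * (A.mulVec x) k) + ∑ k, A k i.1 * w k := by
        rw [hy, ← Finset.sum_add_distrib]
        congr 1; funext k; ring
      rw [hyi]
      have hBw : Bᵀ.mulVec w i = ∑ k, A k i.1 * w k := by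
        simp [Matrix.mulVec, dotProduct, hBdef, colsub, mul_comm]
      rw [hBw]
      by_cases hiT : (i : Fin m) ∈ T <;> simp [hiT] <;> ring
    rw [hbq, Matrix.mulVec_sub]
    simp [Matrix.mulVec_mulVec, Matrix.mulVec_smul]
  -- reduce l2 over Fin m to l2 over Idx S
  have hl2eq : l2 (fun i => cvec A T Δ lam y μ i - x i) =
      l2 (fun j : Idx S => cvec A T Δ lam y μ j.1 - x j.1) := by
    unfold l2
    congr 1
    rw [Finset.sum_coe_sort S (fun j => (cvec A T Δ lam y μ j - x j) ^ 2)]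
    exact (Finset.sum_subset (Finset.subset_univ S) (fun i _ hi => by
      have hc0 : cvec A T Δ lam y μ i = 0 := by
        simp only [cvec]; exact dif_neg hi
      show (cvec A T Δ lam y μ i - x i) ^ 2 = 0
      rw [hc0, hx i hi]; ring)).symm
  -- l2 u = l2 (x - μ on T)
  have hl2u : l2 u = l2 (fun j : Idx T => x j.1 - μ j.1) := by
    unfold l2
    congr 1
    rw [Finset.sum_coe_sort S (fun j => (if j ∈ T then x j - μ j else 0) ^ 2),
      Finset.sum_coe_sort T (fun j => (x j - μ j) ^ 2)]
    have : ∀ j ∈ S, (if j ∈ T then x j - μ j else 0) ^ 2 =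
        if j ∈ T then (x j - μ j) ^ 2 else 0 := by
      intro j _; split <;> simp
    rw [Finset.sum_congr rfl this, Finset.sum_ite_mem]
    congr 1
    rw [Finset.inter_eq_right.mpr (Finset.subset_union_left)]
  rw [hl2eq, hkey, hl2u.symm]
  calc l2 ((Q⁻¹ * Bᵀ).mulVec w - lam • Q⁻¹.mulVec u)
      ≤ l2 ((Q⁻¹ * Bᵀ).mulVec w) + l2 (lam • Q⁻¹.mulVec u) := l2_sub_le _ _
    _ ≤ spec (Q⁻¹ * Bᵀ) * l2 w + lam * (spec Q⁻¹ * l2 u) := by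
        apply add_le_add (l2_mulVec_le _ _)
        rw [l2_smul, abs_of_nonneg hlam]
        exact mul_le_mul_of_nonneg_left (l2_mulVec_le _ _) hlam
    _ = lam * f2 A T Δ lam * l2 u + f3 A T Δ lam * l2 w := by
        simp only [f2, f3, hQdef, hBdef, hS]; ring
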